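/- Under Cartan's multiplication rules for the algebra A_n^m, if all the indices u_r (for r = m+1,...,n) appearing in rule 3 are pairwise distinct, then I_s I_p = 0 for all s, p ∈ {m+1,...,n}. -/

import Mathlib

/-- Proposition 2: in the algebra `A_n^m` with Cartan's multiplication rules, if
all the indices `u r` (for nilpotent indices `r`) are pairwise distinct, then
all products of nilpotent basis vectors vanish. -/
theorem proposition_two (n m : ℕ) (hm : m ≤ n) (A : Type*)
    [CommRing A] [Algebra ℂ A]
    (I : Module.Basis (Fin n) ℂ A)
    (hidem : ∀ r s : Fin n, r.val < m → s.val < m →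
      I r * I s = if r = s then I r else 0)
    (Υ : Fin n → Fin n → Fin n → ℂ)
    (hnil : ∀ r s : Fin n, m ≤ r.val → m ≤ s.val →
      I r * I s = ∑ k ∈ Finset.univ.filter (fun k : Fin n => max r.val s.val < k.val),
        Υ r s k • I k)
    (u : Fin n → Fin n)
    (hu : ∀ s : Fin n, m ≤ s.val → (u s).val < m)
    (hmul3 : ∀ s : Fin n, m ≤ s.val → ∀ r : Fin n, r.val < m →
      I r * I s = if r = u s then I s else 0)
    -- all the `u r` are pairwise distinct
    (hdist : ∀ s p : Fin n, m ≤ s.val → m ≤ p.val → u s = u p → s = p) :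
    ∀ s p : Fin n, m ≤ s.val → m ≤ p.val → I s * I p = 0 := by
  intro s p hs hp
  have h1 : I (u s) * I s = I s := by
    rw [hmul3 s hs (u s) (hu s hs), if_pos rfl]
  calc I s * I p = I (u s) * (I s * I p) := by rw [← mul_assoc, h1]
    _ = ∑ k ∈ Finset.univ.filter (fun k : Fin n => max s.val p.val < k.val),
        Υ s p k • (I (u s) * I k) := by
        rw [hnil s p hs hp, Finset.mul_sum]
        exact Finset.sum_congr rfl fun k _ => mul_smul_comm _ _ _
    _ = 0 := by
        refine Finset.sum_eq_zero fun k hk => ?_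
        simp only [Finset.mem_filter, Finset.mem_univ, true_and] at hk
        have hk' : m ≤ k.val := le_trans hs (le_trans (le_max_left _ _) hk.le)
        have hne : u s ≠ u k := fun h => by
          have := hdist s k hs hk' h
          have : s.val = k.val := congrArg Fin.val this
          omega
        rw [hmul3 k hk' (u s) (hu s hs), if_neg hne, smul_zero]
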